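/- A simplicial set X is upper 2-Segal if and only if for each n ≥ 2 there exists some i with 0 < i < n such that the square with top d_{i+1} : X_{n+1} → X_n, left d_0 : X_{n+1} → X_n, right d_0 : X_n → X_{n-1}, bottom d_i : X_n → X_{n-1} is a pullback. -/

import Mathlib

open CategoryTheory Simplicial

universe u

/-- A commuting square of sets (top `f`, left `g`, right `h`, bottom `k`) is a pullback
if the canonical map to the fiber product is a bijection. -/
def IsPullbackSet {A B C D : Type u} (f : A → B) (g : A → C) (h : B → D) (k : C → D) : Prop :=
  (∀ a, h (f a) = k (g a)) ∧ ∀ (b : B) (c : C), h b = k c → ∃! a : A, f a = b ∧ g a = c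

/-- The upper 2-Segal condition: for every `n ≥ 2` (here `n = m + 2`) and every `0 < i < n`,
the square with top `d_{i+1} : X_{n+1} → X_n`, left `d_0 : X_{n+1} → X_n`,
right `d_0 : X_n → X_{n-1}`, bottom `d_i : X_n → X_{n-1}` is a pullback. -/
def UpperTwoSegal (X : SSet.{u}) : Prop :=
  ∀ (m i : ℕ), 0 < i → ∀ h2 : i < m + 2,
    IsPullbackSet
      (fun x => X.δ (⟨i + 1, by omega⟩ : Fin (m + 4)) x)
      (fun x => X.δ (0 : Fin (m + 4)) x)
      (fun x => X.δ (0 : Fin (m + 3)) x)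
      (fun x => X.δ (⟨i, by omega⟩ : Fin (m + 3)) x)

/-- Horizontal pasting lemma for pullback squares of sets.  The left square `L` has top
`f : A → B`, left `g : A → C`, right `h : B → D`, bottom `k : C → D` (assumed to commute);
the right square `R` has top `f2 : B → E`, left `h : B → D`, right `h2 : E → F`,
bottom `k2 : D → F`.  If `R` is a pullback, then `L` is a pullback iff the pasted square
(top `f2 ∘ f`, left `g`, right `h2`, bottom `k2 ∘ k`) is. -/
theorem IsPullbackSet.paste {A B C D E F : Type u}
    {f : A → B} {g : A → C} {h : B → D} {k : C → D}
    {f2 : B → E} {h2 : E → F} {k2 : D → F}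
    (hLc : ∀ a, h (f a) = k (g a))
    (hR : IsPullbackSet f2 h h2 k2) :
    IsPullbackSet f g h k ↔
      IsPullbackSet (fun a => f2 (f a)) g h2 (fun c => k2 (k c)) := by
  obtain ⟨hRc, hRu⟩ := hR
  constructor
  · rintro ⟨-, hLu⟩
    refine ⟨fun a => by rw [hRc (f a), hLc a], ?_⟩
    intro e c hec
    obtain ⟨b, ⟨hb1, hb2⟩, hbu⟩ := hRu e (k c) hec
    obtain ⟨a, ⟨ha1, ha2⟩, hau⟩ := hLu b c hb2
    refine ⟨a, ⟨show f2 (f a) = e by rw [ha1, hb1], ha2⟩, ?_⟩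
    rintro a' ⟨ha'1, ha'2⟩
    have hfb : f a' = b := hbu (f a') ⟨ha'1, by rw [hLc a', ha'2]⟩
    exact hau a' ⟨hfb, ha'2⟩
  · rintro ⟨-, hCu⟩
    refine ⟨hLc, ?_⟩
    intro b c hbc
    have he : h2 (f2 b) = k2 (k c) := by rw [hRc b, hbc]
    obtain ⟨a, ⟨ha1, ha2⟩, hau⟩ := hCu (f2 b) c he
    have hfab : f a = b := by
      obtain ⟨b', -, hbu⟩ := hRu (f2 b) (k c) he
      have h1 : f a = b' := hbu (f a) ⟨ha1, by rw [hLc a, ha2]⟩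
      have h2' : b = b' := hbu b ⟨rfl, hbc⟩
      rw [h1, h2']
    refine ⟨a, ⟨hfab, ha2⟩, ?_⟩
    rintro a' ⟨ha'1, ha'2⟩
    exact hau a' ⟨show f2 (f a') = f2 b by rw [ha'1], ha'2⟩

/-- The upper `2`-Segal square at level `m` (simplices of `Δ^{m+2}`) with index `i`. -/
def Sq (X : SSet.{u}) (m i : ℕ) (h2 : i < m + 2) : Prop :=
  IsPullbackSet
    (fun x => X.δ (⟨i + 1, by omega⟩ : Fin (m + 4)) x)
    (fun x => X.δ (0 : Fin (m + 4)) x)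
    (fun x => X.δ (0 : Fin (m + 3)) x)
    (fun x => X.δ (⟨i, by omega⟩ : Fin (m + 3)) x)

/-- Commutativity of the upper 2-Segal square: `d_0 ∘ d_{i+1} = d_i ∘ d_0`. -/
theorem sq_comm (X : SSet.{u}) (m i : ℕ) (h2 : i < m + 2) :
    ∀ x : X _⦋m + 3⦌,
      X.δ (0 : Fin (m + 3)) (X.δ (⟨i + 1, by omega⟩ : Fin (m + 4)) x) =
        X.δ (⟨i, by omega⟩ : Fin (m + 3)) (X.δ (0 : Fin (m + 4)) x) := by
  intro x
  have H := X.δ_comp_δ (n := m + 1) (i := (0 : Fin (m + 3)))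
    (j := (⟨i, by omega⟩ : Fin (m + 3))) (Fin.zero_le _)
  have := ConcreteCategory.congr_hom H x
  simpa [Fin.succ_mk] using this

/-- Commutativity of the lower-level square used as the right square in the pasting. -/
theorem sq_comm' (X : SSet.{u}) (m i : ℕ) (h2 : i < m + 1) :
    ∀ x : X _⦋m + 2⦌,
      X.δ (0 : Fin (m + 2)) (X.δ (⟨i + 1, by omega⟩ : Fin (m + 3)) x) =
        X.δ (⟨i, by omega⟩ : Fin (m + 2)) (X.δ (0 : Fin (m + 3)) x) := by
  intro x
  have H := X.δ_comp_δ (n := m) (i := (0 : Fin (m + 2)))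
    (j := (⟨i, by omega⟩ : Fin (m + 2))) (Fin.zero_le _)
  have := ConcreteCategory.congr_hom H x
  simpa [Fin.succ_mk] using this

/-- Casting the index of a square along an equality of natural numbers. -/
theorem sq_cast (X : SSet.{u}) (m : ℕ) {a b : ℕ} (hab : a = b)
    {ha : a < m + 2} {hb : b < m + 2} : Sq X m a ha ↔ Sq X m b hb := by
  subst hab; rfl

/-- The flip: if the level-`(m-1)` square with index `i` is a pullback, then the
level-`m` squares with indices `i` and `i+1` are pullbacks simultaneously. -/
theorem sq_flip (X : SSet.{u}) (m i : ℕ) (h1 : 0 < i) (h2 : i + 1 < m + 2)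
    (hR : IsPullbackSet
      (fun x => X.δ (⟨i + 1, by omega⟩ : Fin (m + 3)) x)
      (fun x => X.δ (0 : Fin (m + 3)) x)
      (fun x => X.δ (0 : Fin (m + 2)) x)
      (fun x => X.δ (⟨i, by omega⟩ : Fin (m + 2)) x)) :
    Sq X m i (by omega) ↔ Sq X m (i + 1) h2 := by
  -- paste each of the two squares with the square `hR` on the right
  have P1 := IsPullbackSet.paste
    (f := fun x : X _⦋m + 3⦌ => X.δ (⟨i + 1, by omega⟩ : Fin (m + 4)) x)
    (g := fun x => X.δ (0 : Fin (m + 4)) x)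
    (sq_comm X m i (by omega)) hR
  have P2 := IsPullbackSet.paste
    (f := fun x : X _⦋m + 3⦌ => X.δ (⟨i + 2, by omega⟩ : Fin (m + 4)) x)
    (g := fun x => X.δ (0 : Fin (m + 4)) x)
    (sq_comm X m (i + 1) h2) hR
  -- the two pasted squares coincide, by the simplicial identities
  have e1 : (fun a : X _⦋m + 3⦌ =>
        X.δ (⟨i + 1, by omega⟩ : Fin (m + 3)) (X.δ (⟨i + 1, by omega⟩ : Fin (m + 4)) a)) =
      (fun a : X _⦋m + 3⦌ =>
        X.δ (⟨i + 1, by omega⟩ : Fin (m + 3)) (X.δ (⟨i + 2, by omega⟩ : Fin (m + 4)) a)) := by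
    funext a
    have H := X.δ_comp_δ_self (n := m + 1) (i := (⟨i + 1, by omega⟩ : Fin (m + 3)))
    have := ConcreteCategory.congr_hom H a
    simpa [Fin.castSucc_mk, Fin.succ_mk] using this
  have e2 : (fun c : X _⦋m + 2⦌ =>
        X.δ (⟨i, by omega⟩ : Fin (m + 2)) (X.δ (⟨i, by omega⟩ : Fin (m + 3)) c)) =
      (fun c : X _⦋m + 2⦌ =>
        X.δ (⟨i, by omega⟩ : Fin (m + 2)) (X.δ (⟨i + 1, by omega⟩ : Fin (m + 3)) c)) := by
    funext c
    have H := X.δ_comp_δ_self (n := m) (i := (⟨i, by omega⟩ : Fin (m + 2)))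
    have := ConcreteCategory.congr_hom H c
    simpa [Fin.castSucc_mk, Fin.succ_mk] using this
  rw [Sq, Sq, P1, P2, e1, e2]

/-- A simplicial set is upper 2-Segal if and only if for each `n ≥ 2` (here `n = m + 2`)
there exists *some* `0 < i < n` for which the upper 2-Segal square is a pullback. -/
theorem upperTwoSegal_iff_exists (X : SSet.{u}) :
    UpperTwoSegal X ↔
      ∀ m : ℕ, ∃ (i : ℕ) (_ : 0 < i) (h2 : i < m + 2),
        IsPullbackSet
          (fun x => X.δ (⟨i + 1, by omega⟩ : Fin (m + 4)) x)
          (fun x => X.δ (0 : Fin (m + 4)) x)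
          (fun x => X.δ (0 : Fin (m + 3)) x)
          (fun x => X.δ (⟨i, by omega⟩ : Fin (m + 3)) x) := by
  constructor
  · intro h m
    exact ⟨1, one_pos, by omega, h m 1 one_pos (by omega)⟩
  · intro hex m
    induction m using Nat.strong_induction_on with
    | _ m IH =>
      intro i hi him
      obtain ⟨i0, hi0, hi0', hsq⟩ := hex m
      -- the flip step at level m (valid for m = k + 1 using IH at level k)
      have step : ∀ j (hj : 0 < j) (hj' : j + 1 < m + 2),
          (Sq X m j (by omega) ↔ Sq X m (j + 1) hj') := by
        intro j hj hj'
        rcases m with _ | k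
        · omega
        · exact sq_flip X (k + 1) j hj hj'
            (IH k (by omega) j hj (by omega))
      -- chain flips
      have chain : ∀ d a (ha : 0 < a) (hlt : a + d < m + 2),
          (Sq X m a (by omega) ↔ Sq X m (a + d) hlt) := by
        intro d
        induction d with
        | zero => intro a _ _; rfl
        | succ d ihd =>
          intro a ha hlt
          have h1 := ihd a ha (by omega)
          have h2 := step (a + d) (by omega) (by omega)
          have c2 : Sq X m (a + d + 1) (by omega) ↔ Sq X m (a + (d + 1)) hlt :=
            sq_cast X m (by omega)
          exact (h1.trans h2).trans c2
      have key : Sq X m i him := by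
        rcases le_or_gt i0 i with hle | hlt
        · have c1 := chain (i - i0) i0 hi0 (by omega)
          have c2 : Sq X m (i0 + (i - i0)) (by omega) ↔ Sq X m i him :=
            sq_cast X m (by omega)
          exact (c1.trans c2).mp hsq
        · have c1 := chain (i0 - i) i hi (by omega)
          have c2 : Sq X m (i + (i0 - i)) (by omega) ↔ Sq X m i0 hi0' :=
            sq_cast X m (by omega)
          exact (c1.trans c2).mpr hsq
      exact key
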